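/- Let p ≥ 2, let A be a real n×d matrix of full column rank, b ∈ ℝ^n, and let w ∈ ℝ^n be strictly positive with w_i ≥ σ(W^{1/2−1/p}A)_i for all i, where W = diag(w). Set M = A^⊤W^{1−2/p}A. Then for all x, y, z ∈ ℝ^d: p(p−1)·Σ_{i∈[n]} |(Ax−b)_i|^{p−2}(Az)_i^2 ≤ e·p(p−1)·Σ_{i∈[n]} |(Ay−b)_i|^{p−2}(Az)_i^2 + p^p·‖x−y‖_M^{p−2}·‖z‖_M^2. -/

import Mathlib

open Matrix

/-- Leverage score of row `i` of matrix `M`: `σ(M)_i = m_i^⊤ (M^⊤ M)⁻¹ m_i`. -/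
noncomputable def levScore {n d : ℕ} (M : Matrix (Fin n) (Fin d) ℝ) (i : Fin n) : ℝ :=
  M i ⬝ᵥ ((Mᵀ * M)⁻¹ *ᵥ M i)

lemma scalar_aux {t : ℝ} (ht : 0 ≤ t) (u v : ℝ) :
    |u| ^ t ≤ Real.exp 1 * |v| ^ t + (t + 1) ^ t * |u - v| ^ t := by
  have hrpos : (0:ℝ) ≤ |u - v| ^ t := Real.rpow_nonneg (abs_nonneg _) t
  rcases eq_or_lt_of_le ht with h0 | h0
  · rw [← h0]
    simp only [Real.rpow_zero, one_mul]
    nlinarith [Real.exp_one_gt_d9]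
  set a := |u| with ha
  set c := |v| with hc
  set e := |u - v| with he
  have hac : a ≤ c + e := by
    calc a = |v + (u - v)| := by rw [ha]; ring_nf
    _ ≤ c + e := abs_add_le _ _
  have ha0 : 0 ≤ a := abs_nonneg _
  have hc0 : 0 ≤ c := abs_nonneg _
  have he0 : 0 ≤ e := abs_nonneg _
  by_cases hcase : a ≤ c * (1 + 1/t)
  · -- a^t ≤ (c(1+1/t))^t = c^t (1+1/t)^t ≤ c^t e
    have h1 : a ^ t ≤ (c * (1 + 1/t)) ^ t :=
      Real.rpow_le_rpow ha0 hcase ht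
    have h2 : (c * (1 + 1/t)) ^ t = c ^ t * (1 + 1/t) ^ t :=
      Real.mul_rpow hc0 (by positivity)
    have h3 : (1 + 1/t) ^ t ≤ Real.exp 1 := by
      calc (1 + 1/t) ^ t ≤ (Real.exp (1/t)) ^ t := by
            apply Real.rpow_le_rpow (by positivity) _ ht
            have := Real.add_one_le_exp (1/t); linarith
      _ = Real.exp (1/t * t) := by
            rw [← Real.exp_one_rpow (1/t), ← Real.rpow_mul (Real.exp_pos 1).le,
              Real.exp_one_rpow]
      _ = Real.exp 1 := by rw [one_div, inv_mul_cancel₀ (ne_of_gt h0)]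
    have : a ^ t ≤ Real.exp 1 * c ^ t := by
      rw [h2] at h1
      calc a ^ t ≤ c ^ t * (1 + 1/t) ^ t := h1
      _ ≤ c ^ t * Real.exp 1 := by
            apply mul_le_mul_of_nonneg_left h3 (Real.rpow_nonneg hc0 t)
      _ = Real.exp 1 * c ^ t := mul_comm _ _
    nlinarith [mul_nonneg (Real.rpow_nonneg (by positivity : (0:ℝ) ≤ t+1) t) hrpos]
  · push_neg at hcase
    -- a > c (1+1/t), so e ≥ a - c > a/(t+1), so a < (t+1) e
    have hkey : a ≤ (t + 1) * e := by
      have h1 : c * (t + 1) < a * t := by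
        have hct : c * (1/t) * t = c := by field_simp
        nlinarith [mul_lt_mul_of_pos_right hcase h0]
      nlinarith [mul_le_mul_of_nonneg_right hac (by linarith : (0:ℝ) ≤ t + 1)]
    have h1 : a ^ t ≤ ((t + 1) * e) ^ t := Real.rpow_le_rpow ha0 hkey ht
    have h2 : ((t + 1) * e) ^ t = (t + 1) ^ t * e ^ t := Real.mul_rpow (by linarith) he0
    have h3 : 0 ≤ Real.exp 1 * c ^ t := by positivity
    linarith [h1.trans_eq h2]

theorem stmt12 {n d : ℕ} (A : Matrix (Fin n) (Fin d) ℝ) (hA : A.rank = d)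
    (b : Fin n → ℝ) (p : ℝ) (hp : 2 ≤ p)
    (w : Fin n → ℝ) (hw : ∀ i, 0 < w i)
    (hσ : ∀ i, levScore (Matrix.diagonal (fun j => w j ^ ((1:ℝ)/2 - 1/p)) * A) i ≤ w i)
    (M : Matrix (Fin d) (Fin d) ℝ)
    (hM : M = Aᵀ * Matrix.diagonal (fun i => w i ^ (1 - 2/p)) * A)
    (x y z : Fin d → ℝ) :
    p * (p - 1) * ∑ i, |(A *ᵥ x - b) i| ^ (p - 2) * ((A *ᵥ z) i) ^ 2 ≤
      Real.exp 1 * (p * (p - 1)) * ∑ i, |(A *ᵥ y - b) i| ^ (p - 2) * ((A *ᵥ z) i) ^ 2 +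
      p ^ p * Real.sqrt ((x - y) ⬝ᵥ (M *ᵥ (x - y))) ^ (p - 2) * (z ⬝ᵥ (M *ᵥ z)) := by
  have hp0 : (0:ℝ) < p := by linarith
  set a : ℝ := (1:ℝ)/2 - 1/p with ha_def
  set N : Matrix (Fin n) (Fin d) ℝ := Matrix.diagonal (fun j => w j ^ a) * A with hN_def
  -- M = Nᵀ * N
  have hMN : M = Nᵀ * N := by
    rw [hM, hN_def, Matrix.transpose_mul, Matrix.diagonal_transpose]
    rw [show Aᵀ * Matrix.diagonal (fun j => w j ^ a) * (Matrix.diagonal (fun j => w j ^ a) * A)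
        = Aᵀ * (Matrix.diagonal (fun j => w j ^ a) * Matrix.diagonal (fun j => w j ^ a)) * A by
      simp only [Matrix.mul_assoc]]
    rw [Matrix.diagonal_mul_diagonal]
    have hdd : (fun i => w i ^ a * w i ^ a) = fun i => w i ^ (1 - 2/p) := by
      funext i
      rw [← Real.rpow_add (hw i)]
      congr 1
      rw [ha_def]
      field_simp
      ring
    rw [hdd]
  -- injectivity
  have hInj : ∀ v : Fin d → ℝ, A *ᵥ v = 0 → v = 0 := by
    have h1 : Module.finrank ℝ (LinearMap.range A.mulVecLin) +
        Module.finrank ℝ (LinearMap.ker A.mulVecLin) = d := by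
      rw [LinearMap.finrank_range_add_finrank_ker A.mulVecLin, Module.finrank_pi, Fintype.card_fin]
    have h2 : LinearMap.ker A.mulVecLin = ⊥ := by
      rw [← Submodule.finrank_eq_zero]
      have : Matrix.rank A = Module.finrank ℝ (LinearMap.range A.mulVecLin) := rfl
      omega
    intro v hv
    have : v ∈ LinearMap.ker A.mulVecLin := by
      simpa [LinearMap.mem_ker, Matrix.mulVecLin_apply] using hv
    simpa [h2] using this
  -- quadratic form as sum of squares
  have hdot : ∀ u v : Fin d → ℝ, u ⬝ᵥ (M *ᵥ v) = (N *ᵥ u) ⬝ᵥ (N *ᵥ v) := by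
    intro u v
    rw [hMN, ← Matrix.mulVec_mulVec, Matrix.dotProduct_mulVec, Matrix.vecMul_transpose]
  have hS : ∀ u : Fin d → ℝ, u ⬝ᵥ (M *ᵥ u) = ∑ i, ((N *ᵥ u) i) ^ 2 := by
    intro u
    rw [hdot]
    simp [dotProduct, sq]
  have hS0 : ∀ u : Fin d → ℝ, 0 ≤ u ⬝ᵥ (M *ᵥ u) := by
    intro u; rw [hS]; positivity
  -- N *ᵥ u pointwise
  have hNu : ∀ (u : Fin d → ℝ) (i : Fin n), (N *ᵥ u) i = w i ^ a * (A *ᵥ u) i := by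
    intro u i
    rw [hN_def, ← Matrix.mulVec_mulVec, Matrix.mulVec_diagonal]
  -- M pos def
  have hPD : M.PosDef := by
    constructor
    · rw [hMN]
      simpa using Matrix.isHermitian_conjTranspose_mul_self N
    · intro v hv
      have hAv : A *ᵥ v ≠ 0 := fun h => hv (Finsupp.ext (fun j => congrFun (hInj v h) j))
      obtain ⟨i, hi⟩ : ∃ i, (A *ᵥ v) i ≠ 0 := by
        by_contra h; push_neg at h; exact hAv (funext h)
      have : (0:ℝ) < ∑ j, ((N *ᵥ v) j) ^ 2 := by
        apply Finset.sum_pos' (fun j _ => sq_nonneg _)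
        refine ⟨i, Finset.mem_univ i, ?_⟩
        have : (N *ᵥ v) i ≠ 0 := by
          rw [hNu]
          exact mul_ne_zero (ne_of_gt (Real.rpow_pos_of_pos (hw i) a)) hi
        positivity
      have key : (v.sum fun i xi => v.sum fun j xj => star xi * M i j * xj) = ⇑v ⬝ᵥ (M *ᵥ ⇑v) := by
        rw [Finsupp.sum_fintype _ _ (by simp)]
        simp only [dotProduct, mulVec, Finset.mul_sum]
        refine Finset.sum_congr rfl fun i _ => ?_
        rw [Finsupp.sum_fintype _ _ (by simp)]
        refine Finset.sum_congr rfl fun j _ => ?_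
        simp [mul_assoc]
      rw [key, hS v]; exact this
  have hMdet : IsUnit M.det := Matrix.isUnit_iff_isUnit_det M |>.1 hPD.isUnit
  -- key leverage inequality
  have hkey : ∀ (u : Fin d → ℝ) (i : Fin n),
      (w i ^ a * (A *ᵥ u) i) ^ 2 ≤ w i * (u ⬝ᵥ (M *ᵥ u)) := by
    intro u i
    set c : Fin d → ℝ := M⁻¹ *ᵥ N i with hc_def
    have hMc : M *ᵥ c = N i := by
      rw [hc_def, Matrix.mulVec_mulVec, Matrix.mul_nonsing_inv M hMdet, Matrix.one_mulVec]
    have hσi : N i ⬝ᵥ c ≤ w i := by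
      have h := hσ i
      simp only [levScore] at h
      rw [← hMN] at h
      exact h
    have hrow : N i ⬝ᵥ u = (N *ᵥ c) ⬝ᵥ (N *ᵥ u) := by
      calc N i ⬝ᵥ u = (M *ᵥ c) ⬝ᵥ u := by rw [hMc]
      _ = u ⬝ᵥ (M *ᵥ c) := dotProduct_comm _ _
      _ = (N *ᵥ u) ⬝ᵥ (N *ᵥ c) := hdot u c
      _ = (N *ᵥ c) ⬝ᵥ (N *ᵥ u) := dotProduct_comm _ _
    have hcc : (N *ᵥ c) ⬝ᵥ (N *ᵥ c) = N i ⬝ᵥ c := by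
      calc (N *ᵥ c) ⬝ᵥ (N *ᵥ c) = c ⬝ᵥ (M *ᵥ c) := (hdot c c).symm
      _ = c ⬝ᵥ N i := by rw [hMc]
      _ = N i ⬝ᵥ c := dotProduct_comm _ _
    have hCS : ((N *ᵥ c) ⬝ᵥ (N *ᵥ u)) ^ 2 ≤
        ((N *ᵥ c) ⬝ᵥ (N *ᵥ c)) * ((N *ᵥ u) ⬝ᵥ (N *ᵥ u)) := by
      simpa [dotProduct, sq] using
        Finset.sum_mul_sq_le_sq_mul_sq Finset.univ (fun j => (N *ᵥ c) j) (fun j => (N *ᵥ u) j)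
    have hNiu : N i ⬝ᵥ u = w i ^ a * (A *ᵥ u) i := by
      have h1 : (N *ᵥ u) i = N i ⬝ᵥ u := rfl
      rw [← h1, hNu]
    rw [← hNiu, hrow]
    calc ((N *ᵥ c) ⬝ᵥ (N *ᵥ u)) ^ 2 ≤ (N i ⬝ᵥ c) * (u ⬝ᵥ (M *ᵥ u)) := by
          rw [← hcc, hdot u u]; exact hCS
    _ ≤ w i * (u ⬝ᵥ (M *ᵥ u)) := mul_le_mul_of_nonneg_right hσi (hS0 u)
  -- abbreviations
  set az : Fin n → ℝ := A *ᵥ z with haz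
  set Sxy : ℝ := (x - y) ⬝ᵥ (M *ᵥ (x - y)) with hSxy
  set Sz : ℝ := z ⬝ᵥ (M *ᵥ z) with hSz_def
  have hSxy0 : 0 ≤ Sxy := hS0 _
  have hSz0 : 0 ≤ Sz := hS0 _
  have hsqnn : 0 ≤ Real.sqrt Sxy ^ (p - 2) := Real.rpow_nonneg (Real.sqrt_nonneg _) _
  have hdiff : ∀ i, (A *ᵥ x - b) i - (A *ᵥ y - b) i = (A *ᵥ (x - y)) i := by
    intro i
    rw [Matrix.mulVec_sub]
    simp only [Pi.sub_apply]
    ring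
  have hsq2a : ∀ i, (w i ^ a) ^ 2 = w i ^ (1 - 2/p) := by
    intro i
    rw [sq, ← Real.rpow_add (hw i)]
    congr 1
    rw [ha_def]
    field_simp
    ring
  -- step B : |(A (x-y))_i|^{p-2} ≤ w_i^{1-2/p} * sqrt(Sxy)^{p-2}
  have hb1 : ∀ i, |(A *ᵥ (x - y)) i| ^ (p - 2) ≤
      w i ^ (1 - 2/p) * Real.sqrt Sxy ^ (p - 2) := by
    intro i
    have h := hkey (x - y) i
    have h2 : ((A *ᵥ (x - y)) i) ^ 2 ≤ w i ^ (2/p) * Sxy := by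
      have hwpos : (0:ℝ) < w i ^ (1 - 2/p) := Real.rpow_pos_of_pos (hw i) _
      have hprod : w i ^ (1 - 2/p) * w i ^ (2/p) = w i := by
        rw [← Real.rpow_add (hw i)]
        norm_num
      rw [mul_pow, hsq2a i] at h
      rw [← mul_le_mul_iff_right₀ hwpos, ← mul_assoc, hprod]
      exact h
    have hs : |(A *ᵥ (x - y)) i| ≤ w i ^ ((1:ℝ)/p) * Real.sqrt Sxy := by
      have := Real.sqrt_le_sqrt h2
      rw [Real.sqrt_sq_eq_abs] at this
      calc |(A *ᵥ (x - y)) i| ≤ Real.sqrt (w i ^ (2/p) * Sxy) := this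
      _ = Real.sqrt (w i ^ (2/p)) * Real.sqrt Sxy := Real.sqrt_mul (Real.rpow_nonneg (hw i).le _) _
      _ = w i ^ ((1:ℝ)/p) * Real.sqrt Sxy := by
          congr 1
          rw [Real.sqrt_eq_rpow, ← Real.rpow_mul (hw i).le]
          congr 1
          ring
    calc |(A *ᵥ (x - y)) i| ^ (p - 2) ≤ (w i ^ ((1:ℝ)/p) * Real.sqrt Sxy) ^ (p - 2) :=
          Real.rpow_le_rpow (abs_nonneg _) hs (by linarith)
    _ = (w i ^ ((1:ℝ)/p)) ^ (p - 2) * Real.sqrt Sxy ^ (p - 2) :=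
          Real.mul_rpow (Real.rpow_nonneg (hw i).le _) (Real.sqrt_nonneg _)
    _ = w i ^ (1 - 2/p) * Real.sqrt Sxy ^ (p - 2) := by
          congr 1
          rw [← Real.rpow_mul (hw i).le]
          congr 1
          field_simp
  -- step C : Sz = ∑ w_i^{1-2/p} az_i^2
  have hSz : Sz = ∑ i, w i ^ (1 - 2/p) * (az i) ^ 2 := by
    rw [hSz_def, hS z]
    apply Finset.sum_congr rfl
    intro i _
    rw [hNu, mul_pow, hsq2a i, haz]
  -- step D : pointwise
  have hpt : ∀ i, |(A *ᵥ x - b) i| ^ (p - 2) * (az i) ^ 2 ≤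
      Real.exp 1 * (|(A *ᵥ y - b) i| ^ (p - 2) * (az i) ^ 2) +
      (p - 1) ^ (p - 2) * Real.sqrt Sxy ^ (p - 2) * (w i ^ (1 - 2/p) * (az i) ^ 2) := by
    intro i
    have h1 := scalar_aux (t := p - 2) (by linarith) ((A *ᵥ x - b) i) ((A *ᵥ y - b) i)
    rw [show p - 2 + 1 = p - 1 by ring, hdiff i] at h1
    have hKnn : (0:ℝ) ≤ (p - 1) ^ (p - 2) := Real.rpow_nonneg (by linarith) _
    calc |(A *ᵥ x - b) i| ^ (p - 2) * (az i) ^ 2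
        ≤ (Real.exp 1 * |(A *ᵥ y - b) i| ^ (p - 2) +
            (p - 1) ^ (p - 2) * |(A *ᵥ (x - y)) i| ^ (p - 2)) * (az i) ^ 2 :=
          mul_le_mul_of_nonneg_right h1 (sq_nonneg _)
    _ = Real.exp 1 * (|(A *ᵥ y - b) i| ^ (p - 2) * (az i) ^ 2) +
          (p - 1) ^ (p - 2) * (|(A *ᵥ (x - y)) i| ^ (p - 2) * (az i) ^ 2) := by ring
    _ ≤ Real.exp 1 * (|(A *ᵥ y - b) i| ^ (p - 2) * (az i) ^ 2) +
          (p - 1) ^ (p - 2) * ((w i ^ (1 - 2/p) * Real.sqrt Sxy ^ (p - 2)) * (az i) ^ 2) := by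
        have := mul_le_mul_of_nonneg_right (hb1 i) (sq_nonneg (az i))
        nlinarith [mul_le_mul_of_nonneg_left this hKnn]
    _ = Real.exp 1 * (|(A *ᵥ y - b) i| ^ (p - 2) * (az i) ^ 2) +
          (p - 1) ^ (p - 2) * Real.sqrt Sxy ^ (p - 2) * (w i ^ (1 - 2/p) * (az i) ^ 2) := by
        ring
  -- sum it up
  have hsum : ∑ i, |(A *ᵥ x - b) i| ^ (p - 2) * (az i) ^ 2 ≤
      Real.exp 1 * ∑ i, |(A *ᵥ y - b) i| ^ (p - 2) * (az i) ^ 2 +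
      (p - 1) ^ (p - 2) * Real.sqrt Sxy ^ (p - 2) * Sz := by
    calc ∑ i, |(A *ᵥ x - b) i| ^ (p - 2) * (az i) ^ 2
        ≤ ∑ i, (Real.exp 1 * (|(A *ᵥ y - b) i| ^ (p - 2) * (az i) ^ 2) +
            (p - 1) ^ (p - 2) * Real.sqrt Sxy ^ (p - 2) * (w i ^ (1 - 2/p) * (az i) ^ 2)) :=
          Finset.sum_le_sum (fun i _ => hpt i)
    _ = Real.exp 1 * ∑ i, |(A *ᵥ y - b) i| ^ (p - 2) * (az i) ^ 2 +
          (p - 1) ^ (p - 2) * Real.sqrt Sxy ^ (p - 2) *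
            ∑ i, w i ^ (1 - 2/p) * (az i) ^ 2 := by
        rw [Finset.sum_add_distrib, Finset.mul_sum, Finset.mul_sum]
    _ = _ := by rw [← hSz]
  -- coefficient inequality
  have hcoef : p * (p - 1) * (p - 1) ^ (p - 2) ≤ p ^ p := by
    have hne : p - 1 ≠ 0 := by linarith
    have e1 : (p - 1) * (p - 1) ^ (p - 2) = (p - 1) ^ (p - 1) := by
      have h := Real.rpow_add_one hne (p - 2)
      rw [show p - 2 + 1 = p - 1 by ring] at h
      rw [mul_comm]; exact h.symm
    have e2 : (p - 1) ^ (p - 1) ≤ p ^ (p - 1) :=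
      Real.rpow_le_rpow (by linarith) (by linarith) (by linarith)
    have e3 : p * p ^ (p - 1) = p ^ p := by
      have h := Real.rpow_add_one (ne_of_gt hp0) (p - 1)
      rw [show p - 1 + 1 = p by ring] at h
      rw [mul_comm]; exact h.symm
    calc p * (p - 1) * (p - 1) ^ (p - 2) = p * ((p - 1) * (p - 1) ^ (p - 2)) := by ring
    _ = p * (p - 1) ^ (p - 1) := by rw [e1]
    _ ≤ p * p ^ (p - 1) := mul_le_mul_of_nonneg_left e2 (by linarith)
    _ = p ^ p := e3
  -- final assembly
  have hpp1 : (0:ℝ) ≤ p * (p - 1) := by nlinarith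
  calc p * (p - 1) * ∑ i, |(A *ᵥ x - b) i| ^ (p - 2) * (az i) ^ 2
      ≤ p * (p - 1) * (Real.exp 1 * ∑ i, |(A *ᵥ y - b) i| ^ (p - 2) * (az i) ^ 2 +
          (p - 1) ^ (p - 2) * Real.sqrt Sxy ^ (p - 2) * Sz) :=
        mul_le_mul_of_nonneg_left hsum hpp1
  _ = Real.exp 1 * (p * (p - 1)) * ∑ i, |(A *ᵥ y - b) i| ^ (p - 2) * (az i) ^ 2 +
        (p * (p - 1) * (p - 1) ^ (p - 2)) * (Real.sqrt Sxy ^ (p - 2) * Sz) := by ring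
  _ ≤ Real.exp 1 * (p * (p - 1)) * ∑ i, |(A *ᵥ y - b) i| ^ (p - 2) * (az i) ^ 2 +
        p ^ p * (Real.sqrt Sxy ^ (p - 2) * Sz) := by
      have := mul_le_mul_of_nonneg_right hcoef (mul_nonneg hsqnn hSz0)
      linarith
  _ = Real.exp 1 * (p * (p - 1)) * ∑ i, |(A *ᵥ y - b) i| ^ (p - 2) * (az i) ^ 2 +
        p ^ p * Real.sqrt Sxy ^ (p - 2) * Sz := by ring
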